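/- arXiv:1212.6913 — 8 statements merged into one kernel-verified Lean document; each statement's English description precedes it below -/
import Mathlib

section
/- Let x : ℝ → 𝔹ⁿ be a function, μ ∈ 𝔹ⁿ, T > 0, and t₀, t₁ ∈ ℝ with t₀ < t₁ < t₀ + T. Assume that T_μ^x = (-∞, t₀) ∪ ⋃_{k∈ℕ} [t₁ + kT, t₀ + (k+1)T). Then for every t' ∉ [t₁ - T, t₀), at least one of the following fails: (i) (-∞, t'] ⊆ T_μ^x; (ii) for every t ∈ T_μ^x ∩ [t', ∞) and every z ∈ ℤ with t + zT ≥ t', one has t + zT ∈ T_μ^x. -/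
/-- With the same hypotheses, for every `t' ∉ [t₁ - T, t₀)` at
least one of the properties (P1), (P2) fails. -/
theorem stmt_1 (n : ℕ) (x : ℝ → (Fin n → Bool)) (μ : Fin n → Bool)
    (T t₀ t₁ : ℝ) (hT : 0 < T) (h01 : t₀ < t₁) (h1T : t₁ < t₀ + T)
    (hset : {t : ℝ | x t = μ} =
      Set.Iio t₀ ∪ ⋃ k : ℕ, Set.Ico (t₁ + (k : ℝ) * T) (t₀ + ((k : ℝ) + 1) * T)) :
    ∀ t' : ℝ, t' ∉ Set.Ico (t₁ - T) t₀ →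
      ¬ (Set.Iic t' ⊆ {t : ℝ | x t = μ}) ∨
      ¬ (∀ t ∈ {t : ℝ | x t = μ} ∩ Set.Ici t', ∀ z : ℤ,
        t' ≤ t + (z : ℝ) * T → t + (z : ℝ) * T ∈ {t : ℝ | x t = μ}) := by
  -- any point in [t₀, t₁) is not in the set
  have hgap : ∀ p : ℝ, t₀ ≤ p → p < t₁ → p ∉ {t : ℝ | x t = μ} := by
    intro p hp0 hp1 hp
    rw [hset] at hp
    rcases hp with hp | hp
    · exact absurd hp (not_lt.2 hp0)
    · obtain ⟨k, hk⟩ := Set.mem_iUnion.1 hp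
      obtain ⟨hk1, hk2⟩ := hk
      have hk0 : (0:ℝ) ≤ (k:ℝ) := Nat.cast_nonneg k
      nlinarith
  intro t' ht'
  rw [Set.mem_Ico, not_and_or, not_le, not_lt] at ht'
  rcases ht' with h | h
  · -- t' < t₁ - T : break P2
    right
    intro hP2
    set t := max t' (t₀ - T) with htdef
    have ht_mem : t ∈ {s : ℝ | x s = μ} := by
      rw [hset]
      left
      simp only [Set.mem_Iio]
      apply max_lt <;> linarith
    have h1 := hP2 t ⟨ht_mem, Set.mem_Ici.2 (le_max_left t' (t₀ - T))⟩ 1 (by push_cast; nlinarith [le_max_left t' (t₀ - T)])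
    have : t + (1:ℤ) * T ∉ {s : ℝ | x s = μ} := by
      apply hgap
      · push_cast
        have := le_max_right t' (t₀ - T)
        linarith
      · push_cast
        have h2 : t' + T < t₁ := by linarith
        have h3 : t₀ < t₁ := h01
        rcases max_cases t' (t₀ - T) with ⟨he, _⟩ | ⟨he, _⟩ <;> rw [htdef, he] <;> linarith
    exact this h1
  · -- t₀ ≤ t' : break P1
    left
    intro hP1
    exact hgap t₀ le_rfl h01 (hP1 (Set.mem_Iic.2 h))
end

section
/- Let x : ℝ → 𝔹ⁿ be a function, μ ∈ 𝔹ⁿ, T > 0, and t₀, t₁ ∈ ℝ with t₀ < t₁ < t₀ + T. Assume that T_μ^x = (-∞, t₀) ∪ ⋃_{k∈ℕ} [t₁ + kT, t₀ + (k+1)T). If T' > 0 and t'' ∈ ℝ are such that (-∞, t''] ⊆ T_μ^x and for every t ∈ T_μ^x ∩ [t'', ∞) and every z ∈ ℤ with t + zT' ≥ t'' one has t + zT' ∈ T_μ^x, then T' ≥ T. -/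
/-- With the same hypotheses, any `T' > 0` admitting a `t''`
satisfying (P1) and (P2) (with `T'` in place of `T`) satisfies `T' ≥ T`. -/
theorem stmt_2 (n : ℕ) (x : ℝ → (Fin n → Bool)) (μ : Fin n → Bool)
    (T t₀ t₁ : ℝ) (hT : 0 < T) (h01 : t₀ < t₁) (h1T : t₁ < t₀ + T)
    (hset : {t : ℝ | x t = μ} =
      Set.Iio t₀ ∪ ⋃ k : ℕ, Set.Ico (t₁ + (k : ℝ) * T) (t₀ + ((k : ℝ) + 1) * T))
    (T' t'' : ℝ) (hT' : 0 < T')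
    (hP1 : Set.Iic t'' ⊆ {t : ℝ | x t = μ})
    (hP2 : ∀ t ∈ {t : ℝ | x t = μ} ∩ Set.Ici t'', ∀ z : ℤ,
      t'' ≤ t + (z : ℝ) * T' → t + (z : ℝ) * T' ∈ {t : ℝ | x t = μ}) :
    T' ≥ T := by
  by_contra h
  push_neg at h
  -- t'' < t₀ since t₀ is not in the set
  have ht''0 : t'' < t₀ := by
    by_contra hc
    push_neg at hc
    have h0 : t₀ ∈ {t : ℝ | x t = μ} := hP1 hc
    rw [hset] at h0
    rcases h0 with h' | h'
    · exact absurd h' (lt_irrefl t₀)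
    · simp only [Set.mem_iUnion, Set.mem_Ico] at h'
      obtain ⟨k, hk1, hk2⟩ := h'
      nlinarith [Nat.cast_nonneg (α := ℝ) k]
  set t : ℝ := max t₁ (t₀ + T - T') with ht
  have htmem : t ∈ {t : ℝ | x t = μ} := by
    rw [hset]
    right
    refine Set.mem_iUnion.2 ⟨0, ?_⟩
    simp only [Set.mem_Ico, Nat.cast_zero]
    constructor
    · have := le_max_left t₁ (t₀ + T - T')
      linarith [this]
    · have : t < t₀ + T := max_lt h1T (by linarith)
      linarith
  have ht1 : t₁ ≤ t := le_max_left _ _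
  have ht'' : t'' ≤ t := by linarith
  have hge : t'' ≤ t + (1 : ℤ) * T' := by push_cast; linarith
  have hmem2 := hP2 t ⟨htmem, ht''⟩ 1 hge
  rw [hset] at hmem2
  have hlow : t₀ + T ≤ t + (1 : ℤ) * T' := by
    have := le_max_right t₁ (t₀ + T - T')
    push_cast
    linarith
  have hhigh : t + (1 : ℤ) * T' < t₁ + T := by
    have h1 : t₁ + T' < t₁ + T := by linarith
    have h2 : (t₀ + T - T') + T' < t₁ + T := by linarith
    have : t + T' < t₁ + T := by
      rcases max_cases t₁ (t₀ + T - T') with ⟨he, _⟩ | ⟨he, _⟩ <;> rw [ht, he] <;> linarith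
    push_cast
    linarith
  norm_num at hlow hhigh
  rcases hmem2 with h' | h'
  · simp only [Set.mem_Iio] at h'
    norm_num at h'
    linarith
  · simp only [Set.mem_iUnion, Set.mem_Ico] at h'
    obtain ⟨k, hk1, hk2⟩ := h'
    rcases k with _ | k
    · push_cast at hk1 hk2
      norm_num at hk1 hk2
      linarith
    · have hkc : (1 : ℝ) ≤ ((k : ℝ) + 1) := by
        have := Nat.cast_nonneg (α := ℝ) k
        linarith
      push_cast at hk1 hk2
      norm_num at hk1 hk2
      nlinarith
end

section
/- Let x : ℝ → 𝔹ⁿ be a function, μ ∈ 𝔹ⁿ, T > 0, and t₀, t₁ ∈ ℝ with t₀ < t₁ < t₀ + T. Assume that T_μ^x = (-∞, t₀) ∪ ⋃_{k∈ℕ} [t₁ + kT, t₀ + (k+1)T). If T' > 0 and t'' ∈ ℝ are such that (-∞, t''] ⊆ T_μ^x and for every t ∈ T_μ^x ∩ [t'', ∞) and every z ∈ ℤ with t + zT' ≥ t'' one has t + zT' ∈ T_μ^x, then t'' ∈ [t₁ - T', t₀). -/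
/-- With the same hypotheses, any `t''` witnessing (P1) and (P2)
for some `T' > 0` must lie in `[t₁ - T', t₀)`. -/
theorem stmt_3 (n : ℕ) (x : ℝ → (Fin n → Bool)) (μ : Fin n → Bool)
    (T t₀ t₁ : ℝ) (hT : 0 < T) (h01 : t₀ < t₁) (h1T : t₁ < t₀ + T)
    (hset : {t : ℝ | x t = μ} =
      Set.Iio t₀ ∪ ⋃ k : ℕ, Set.Ico (t₁ + (k : ℝ) * T) (t₀ + ((k : ℝ) + 1) * T))
    (T' t'' : ℝ) (hT' : 0 < T')
    (hP1 : Set.Iic t'' ⊆ {t : ℝ | x t = μ})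
    (hP2 : ∀ t ∈ {t : ℝ | x t = μ} ∩ Set.Ici t'', ∀ z : ℤ,
      t'' ≤ t + (z : ℝ) * T' → t + (z : ℝ) * T' ∈ {t : ℝ | x t = μ}) :
    t'' ∈ Set.Ico (t₁ - T') t₀ := by
  have key : ∀ s : ℝ, s ∈ {t : ℝ | x t = μ} ↔
      s < t₀ ∨ ∃ k : ℕ, t₁ + (k : ℝ) * T ≤ s ∧ s < t₀ + ((k : ℝ) + 1) * T := by
    intro s
    rw [hset]
    simp [Set.mem_iUnion]
  have ht''0 : t'' < t₀ := by
    by_contra h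
    push_neg at h
    have h0 : t₀ ∈ {t : ℝ | x t = μ} := hP1 h
    rcases (key t₀).1 h0 with h' | ⟨k, h1, h2⟩
    · exact absurd h' (lt_irrefl _)
    · have hk : (0 : ℝ) ≤ (k : ℝ) := Nat.cast_nonneg k
      nlinarith
  refine ⟨?_, ht''0⟩
  by_contra h
  push_neg at h
  -- h : t'' < t₁ - T'
  set a := max t'' (t₀ - T') with ha
  set b := min t₀ (t₁ - T') with hb
  have hab : a < b := by
    apply max_lt <;> apply lt_min <;> linarith
  set t := (a + b) / 2 with ht
  have hta : a < t := by simp only [ht]; linarith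
  have htb : t < b := by simp only [ht]; linarith
  have ht'' : t'' ≤ t := le_trans (le_max_left _ _) hta.le
  have ht0 : t < t₀ := lt_of_lt_of_le htb (min_le_left _ _)
  have ht1 : t + T' < t₁ := by
    have := lt_of_lt_of_le htb (min_le_right _ _); linarith
  have htT : t₀ ≤ t + T' := by
    have := lt_of_le_of_lt (le_max_right t'' (t₀ - T')) hta; linarith
  have hmem : t ∈ {t : ℝ | x t = μ} := (key t).2 (Or.inl ht0)
  have := hP2 t ⟨hmem, ht''⟩ 1 (by push_cast; linarith)
  push_cast at this
  rcases (key (t + 1 * T')).1 this with h' | ⟨k, h1, h2⟩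
  · linarith
  · have hk : (0 : ℝ) ≤ (k : ℝ) := Nat.cast_nonneg k
    nlinarith
end

section
/- Let x : ℝ → 𝔹ⁿ be a function, μ ∈ 𝔹ⁿ, T > 0, and t₀, t₁ ∈ ℝ with t₀ < t₁ < t₀ + T. Assume that T_μ^x = (-∞, t₀) ∪ ⋃_{k∈ℕ} [t₁ + kT, t₀ + (k+1)T). Then T is the least element of the set of all T' > 0 for which there exists t'' ∈ ℝ such that (-∞, t''] ⊆ T_μ^x and for every t ∈ T_μ^x ∩ [t'', ∞) and every z ∈ ℤ with t + zT' ≥ t'' one has t + zT' ∈ T_μ^x; that is, T itself belongs to this set (with any t'' ∈ [t₁ - T, t₀)) and every member T' of this set satisfies T' ≥ T. -/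
/-- With the same hypotheses, `T` is the prime period of `μ`:
`T` itself is a period (witnessed by any `t'' ∈ [t₁ - T, t₀)`), and every
period `T'` satisfies `T' ≥ T`. -/
theorem stmt_4 (n : ℕ) (x : ℝ → (Fin n → Bool)) (μ : Fin n → Bool)
    (T t₀ t₁ : ℝ) (hT : 0 < T) (h01 : t₀ < t₁) (h1T : t₁ < t₀ + T)
    (hset : {t : ℝ | x t = μ} =
      Set.Iio t₀ ∪ ⋃ k : ℕ, Set.Ico (t₁ + (k : ℝ) * T) (t₀ + ((k : ℝ) + 1) * T)) :
    (∀ t'' ∈ Set.Ico (t₁ - T) t₀,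
      Set.Iic t'' ⊆ {t : ℝ | x t = μ} ∧
      (∀ t ∈ {t : ℝ | x t = μ} ∩ Set.Ici t'', ∀ z : ℤ,
        t'' ≤ t + (z : ℝ) * T → t + (z : ℝ) * T ∈ {t : ℝ | x t = μ})) ∧
    (∀ T' : ℝ, 0 < T' →
      (∃ t'' : ℝ, Set.Iic t'' ⊆ {t : ℝ | x t = μ} ∧
        (∀ t ∈ {t : ℝ | x t = μ} ∩ Set.Ici t'', ∀ z : ℤ,
          t'' ≤ t + (z : ℝ) * T' → t + (z : ℝ) * T' ∈ {t : ℝ | x t = μ})) →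
      T' ≥ T) := by
  have hmem : ∀ t : ℝ, x t = μ ↔
      (t < t₀ ∨ ∃ k : ℕ, t₁ + (k : ℝ) * T ≤ t ∧ t < t₀ + ((k : ℝ) + 1) * T) := by
    intro t
    have h := Set.ext_iff.1 hset t
    simpa [Set.mem_Iio, Set.mem_Ico, Set.mem_iUnion, Set.mem_setOf_eq] using h
  constructor
  · rintro t'' ⟨h1, h2⟩
    refine ⟨fun t ht => (hmem t).2 (Or.inl (lt_of_le_of_lt ht h2)), ?_⟩
    rintro t ⟨htS, htge⟩ z hz
    simp only [Set.mem_setOf_eq] at htS ⊢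
    simp only [Set.mem_Ici] at htge
    rw [hmem] at htS ⊢
    rcases htS with hlt | ⟨k, hk1, hk2⟩
    · rcases le_or_gt z 0 with hz0 | hz0
      · left
        have hzr : (z : ℝ) ≤ 0 := by exact_mod_cast hz0
        have hzT : (z : ℝ) * T ≤ 0 := mul_nonpos_iff.2 (Or.inr ⟨hzr, hT.le⟩)
        linarith
      · right
        have hz1 : (1 : ℤ) ≤ z := hz0
        have hc : (((z - 1).toNat : ℕ) : ℝ) = (z : ℝ) - 1 := by
          have h := Int.toNat_of_nonneg (show (0 : ℤ) ≤ z - 1 by omega)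
          exact_mod_cast congrArg (fun m : ℤ => (m : ℝ)) h
        refine ⟨(z - 1).toNat, ?_, ?_⟩
        · rw [hc]; linarith
        · rw [hc]; linarith
    · rcases le_or_gt 0 ((k : ℤ) + z) with hm | hm
      · right
        have hc : ((((k : ℤ) + z).toNat : ℕ) : ℝ) = (k : ℝ) + z := by
          have h := Int.toNat_of_nonneg hm
          exact_mod_cast congrArg (fun m : ℤ => (m : ℝ)) h
        refine ⟨((k : ℤ) + z).toNat, ?_, ?_⟩
        · rw [hc]; linarith
        · rw [hc]; linarith
      · left
        have hm1 : (k : ℤ) + z ≤ -1 := by omega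
        have hmr : ((k : ℝ) + z) ≤ -1 := by exact_mod_cast hm1
        nlinarith [hT.le]
  · rintro T' hT' ⟨t'', hIic, hper⟩
    by_contra hlt
    push_neg at hlt
    have ht''lt : t'' < t₀ := by
      by_contra h
      push_neg at h
      have h0 : x t₀ = μ := hIic h
      rw [hmem] at h0
      rcases h0 with h0 | ⟨k, hk1, hk2⟩
      · exact absurd h0 (lt_irrefl _)
      · have : (0 : ℝ) ≤ (k : ℝ) * T := mul_nonneg (Nat.cast_nonneg k) hT.le
        linarith
    set d := T - T' with hd
    have hdpos : 0 < d := by simp [hd]; linarith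
    set δ := min d (t₀ + T - t₁) with hδ
    have hδpos : 0 < δ := lt_min hdpos (by linarith)
    have hδd : δ ≤ d := min_le_left _ _
    have hδ2 : δ ≤ t₀ + T - t₁ := min_le_right _ _
    set t := t₀ + T - δ with htdef
    have htS : x t = μ := by
      rw [hmem]; right
      exact ⟨0, by push_cast; simp [htdef]; linarith, by push_cast; simp [htdef]; linarith⟩
    have htge : t ∈ Set.Ici t'' := by
      simp only [Set.mem_Ici, htdef]; linarith
    have hzge : t'' ≤ t + ((-1 : ℤ) : ℝ) * T' := by
      push_cast; simp only [htdef]; linarith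
    have hp := hper t ⟨htS, htge⟩ (-1) hzge
    simp only [Set.mem_setOf_eq] at hp
    rw [hmem] at hp
    have hplt : t + ((-1 : ℤ) : ℝ) * T' < t₁ := by
      rcases min_choice d (t₀ + T - t₁) with hmin | hmin
      · push_cast; rw [htdef, hδ, hmin]; simp [hd]; linarith
      · push_cast; rw [htdef, hδ, hmin]; linarith
    rcases hp with h0 | ⟨k, hk1, hk2⟩
    · push_cast at h0
      rw [htdef] at h0
      linarith
    · have hk0 : (0 : ℝ) ≤ (k : ℝ) * T := mul_nonneg (Nat.cast_nonneg k) hT.le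
      linarith
end

section
/- Let x : ℝ → 𝔹ⁿ, μ ∈ 𝔹ⁿ, T > 0 and t' ∈ ℝ be such that (-∞, t'] ⊆ T_μ^x and for every t ∈ T_μ^x ∩ [t', ∞) and every z ∈ ℤ with t + zT ≥ t', one has t + zT ∈ T_μ^x. Suppose t₀, t₁ ∈ ℝ and c, v ∈ 𝔹ⁿ satisfy: x(t) = μ for all t < t₀; x(t₀) ≠ μ; t₁ < t₀ + T; there exists ε > 0 with x(ξ) = c for all ξ ∈ (t₀ + T - ε, t₀ + T); x(t) = c for all t ∈ [t₁, t₀ + T); there exists ε > 0 with x(ξ) = v for all ξ ∈ (t₁ - ε, t₁); and v ≠ x(t₁). Then t₁ - T ≤ t' < t₀ < t₁. -/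
/-- Under the periodicity hypotheses (P1), (P2) and the defining
properties of `t₀`, `t₁` (with `c` the left limit of `x` at `t₀ + T` and `v`
the left limit of `x` at `t₁`), we have `t₁ - T ≤ t' < t₀ < t₁`. -/
theorem stmt_6 (n : ℕ) (x : ℝ → (Fin n → Bool)) (μ : Fin n → Bool)
    (T t' : ℝ) (hT : 0 < T)
    (hP1 : Set.Iic t' ⊆ {t : ℝ | x t = μ})
    (hP2 : ∀ t ∈ {t : ℝ | x t = μ} ∩ Set.Ici t', ∀ z : ℤ,
      t' ≤ t + (z : ℝ) * T → t + (z : ℝ) * T ∈ {t : ℝ | x t = μ})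
    (t₀ t₁ : ℝ) (c v : Fin n → Bool)
    (h0a : ∀ t < t₀, x t = μ)
    (h0b : x t₀ ≠ μ)
    (h1a : t₁ < t₀ + T)
    (hc : ∃ ε > 0, ∀ ξ ∈ Set.Ioo (t₀ + T - ε) (t₀ + T), x ξ = c)
    (h1b : ∀ t ∈ Set.Ico t₁ (t₀ + T), x t = c)
    (hv : ∃ ε > 0, ∀ ξ ∈ Set.Ioo (t₁ - ε) t₁, x ξ = v)
    (h1c : v ≠ x t₁) :
    t₁ - T ≤ t' ∧ t' < t₀ ∧ t₀ < t₁ := by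
  obtain ⟨ε₁, hε₁, hc⟩ := hc
  obtain ⟨ε₂, hε₂, hv⟩ := hv
  -- t' < t₀
  have ht' : t' < t₀ := by
    by_contra h
    push_neg at h
    exact h0b (hP1 h)
  -- c = μ
  have hcμ : c = μ := by
    obtain ⟨t, ht1, ht2⟩ := exists_between (show max t' (t₀ - ε₁) < t₀ by
      simp [ht', hε₁])
    have htμ : x t = μ := h0a t ht2
    have := hP2 t ⟨htμ, le_of_lt (lt_of_le_of_lt (le_max_left _ _) ht1)⟩ 1
      (by push_cast; nlinarith [le_max_left t' (t₀ - ε₁)])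
    have hc' := hc (t + (1 : ℤ) * T)
      ⟨by push_cast; nlinarith [lt_of_le_of_lt (le_max_right t' (t₀ - ε₁)) ht1],
       by push_cast; nlinarith⟩
    exact hc'.symm.trans this
  -- t₀ < t₁
  have h01 : t₀ < t₁ := by
    by_contra h
    push_neg at h
    have hx1 : x t₁ = μ := by rw [h1b t₁ ⟨le_refl _, h1a⟩, hcμ]
    obtain ⟨ξ, hξ1, hξ2⟩ := exists_between (show t₁ - ε₂ < t₁ by linarith)
    have hvμ : v = μ := by
      rw [← hv ξ ⟨hξ1, hξ2⟩]; exact h0a ξ (lt_of_lt_of_le hξ2 h)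
    exact h1c (hvμ.trans hx1.symm)
  refine ⟨?_, ht', h01⟩
  -- t₁ - T ≤ t'
  by_contra h
  push_neg at h
  have hx1T : x (t₁ - T) = μ := h0a _ (by linarith)
  have hx1 : x t₁ = μ := by
    have := hP2 (t₁ - T) ⟨hx1T, le_of_lt h⟩ 1 (by push_cast; linarith)
    simpa using this
  obtain ⟨s, hs1, hs2⟩ := exists_between (show max (t₁ - ε₂) (t' + T) < t₁ by
    simp only [max_lt_iff]; constructor <;> linarith)
  have hsv : x s = v := hv s ⟨lt_of_le_of_lt (le_max_left _ _) hs1, hs2⟩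
  have hsT : t' + T < s := lt_of_le_of_lt (le_max_right _ _) hs1
  have hsμ : x (s - T) = μ := h0a _ (by linarith)
  have hsμ' := hP2 (s - T) ⟨hsμ, by simp only [Set.mem_Ici]; linarith⟩
    1 (by push_cast; linarith)
  have : x s = μ := by
    have e : s - T + (1 : ℤ) * T = s := by push_cast; ring
    rwa [e] at hsμ'
  exact h1c (by rw [← hsv, this, hx1])
end

section
/- Let x : ℝ → 𝔹ⁿ, μ ∈ 𝔹ⁿ, T > 0 and t' ∈ ℝ be such that (-∞, t'] ⊆ T_μ^x and for every t ∈ T_μ^x ∩ [t', ∞) and every z ∈ ℤ with t + zT ≥ t', one has t + zT ∈ T_μ^x. Suppose t₀, t₁ ∈ ℝ and c, v ∈ 𝔹ⁿ satisfy: x(t) = μ for all t < t₀; x(t₀) ≠ μ; t₁ < t₀ + T; there exists ε > 0 with x(ξ) = c for all ξ ∈ (t₀ + T - ε, t₀ + T); x(t) = c for all t ∈ [t₁, t₀ + T); there exists ε > 0 with x(ξ) = v for all ξ ∈ (t₁ - ε, t₁); and v ≠ x(t₁). Then (-∞, t₀) ∪ ⋃_{k∈ℕ} [t₁ + kT, t₀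 + (k+1)T) ⊆ T_μ^x. -/
/-- Under the same hypotheses as Statement 6, the set
`(-∞, t₀) ∪ ⋃_{k∈ℕ} [t₁ + kT, t₀ + (k+1)T)` is contained in `T_μ^x`. -/
theorem stmt_7 (n : ℕ) (x : ℝ → (Fin n → Bool)) (μ : Fin n → Bool)
    (T t' : ℝ) (hT : 0 < T)
    (hP1 : Set.Iic t' ⊆ {t : ℝ | x t = μ})
    (hP2 : ∀ t ∈ {t : ℝ | x t = μ} ∩ Set.Ici t', ∀ z : ℤ,
      t' ≤ t + (z : ℝ) * T → t + (z : ℝ) * T ∈ {t : ℝ | x t = μ})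
    (t₀ t₁ : ℝ) (c v : Fin n → Bool)
    (h0a : ∀ t < t₀, x t = μ)
    (h0b : x t₀ ≠ μ)
    (h1a : t₁ < t₀ + T)
    (hc : ∃ ε > 0, ∀ ξ ∈ Set.Ioo (t₀ + T - ε) (t₀ + T), x ξ = c)
    (h1b : ∀ t ∈ Set.Ico t₁ (t₀ + T), x t = c)
    (hv : ∃ ε > 0, ∀ ξ ∈ Set.Ioo (t₁ - ε) t₁, x ξ = v)
    (h1c : v ≠ x t₁) :
    Set.Iio t₀ ∪ (⋃ k : ℕ, Set.Ico (t₁ + (k : ℝ) * T) (t₀ + ((k : ℝ) + 1) * T))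
      ⊆ {t : ℝ | x t = μ} := by
  have ht' : t' < t₀ := by
    by_contra h
    exact h0b (hP1 (not_lt.mp h))
  have ht01 : t₀ ≤ t₁ := by
    by_contra h
    push_neg at h
    obtain ⟨ε, hε, hεv⟩ := hv
    have hx : x (t₁ - ε / 2) = v := hεv _ ⟨by linarith, by linarith⟩
    have hx2 : x (t₁ - ε / 2) = μ := h0a _ (by linarith)
    exact h1c ((hx.symm.trans hx2).trans (h0a t₁ h).symm)
  have hcμ : c = μ := by
    set s : ℝ := max t' (t₁ - T) with hs
    have hs1 : s < t₀ := max_lt (by linarith) (by linarith)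
    set s' : ℝ := (s + t₀) / 2 with hs'
    have hss' : s < s' := by simp only [hs']; linarith
    have hs't0 : s' < t₀ := by simp only [hs']; linarith
    have h1 : t' ≤ s' := le_trans (le_max_left t' (t₁ - T)) hss'.le
    have h2 : t₁ - T ≤ s' := le_trans (le_max_right t' (t₁ - T)) hss'.le
    have hxs' : x s' = μ := h0a _ hs't0
    have hper := hP2 s' ⟨hxs', h1⟩ 1 (by push_cast; linarith)
    have hmem : s' + ((1 : ℤ) : ℝ) * T ∈ Set.Ico t₁ (t₀ + T) :=
      ⟨by push_cast; linarith, by push_cast; linarith⟩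
    have := h1b _ hmem
    exact this.symm.trans hper
  intro t ht
  rcases ht with h | h
  · exact h0a t h
  · simp only [Set.mem_iUnion, Set.mem_Ico] at h
    obtain ⟨k, hk1, hk2⟩ := h
    have hkT : (0 : ℝ) ≤ (k : ℝ) * T := by positivity
    have hbase : x (t - (k : ℝ) * T) = μ := by
      rw [← hcμ]
      exact h1b _ ⟨by linarith, by linarith⟩
    have hper := hP2 (t - (k : ℝ) * T) ⟨hbase, by
      simp only [Set.mem_Ici]; linarith⟩ (k : ℤ) (by push_cast; linarith)
    simpa using hper
end

section
/- Let x : ℝ → 𝔹ⁿ be a signal with initial value μ, let T > 0, and let t₀ ∈ ℝ be such that x(t) = μ for all t < t₀ and x(t₀) ≠ μ. Then there exist t₁ ∈ ℝ and c, v ∈ 𝔹ⁿ such that: t₁ < t₀ + T; there exists ε > 0 with x(ξ) = c for all ξ ∈ (t₀ + T - ε, t₀ + T); x(t) = c for all t ∈ [t₁, t₀ + T); there exists ε > 0 with x(ξ) = v for all ξ ∈ (t₁ - ε, t₁); and v ≠ x(t₁). -/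
/-- A function `x : ℝ → 𝔹ⁿ` is a signal with initial value `μ` if there is a
strictly increasing sequence of reals, unbounded from above, such that `x`
equals `μ` before the first point and is constant on each interval
`[tₖ, tₖ₊₁)`. -/
def IsSignalWithInit (n : ℕ) (x : ℝ → (Fin n → Bool)) (μ : Fin n → Bool) : Prop :=
  ∃ tk : ℕ → ℝ, StrictMono tk ∧ (∀ M : ℝ, ∃ k : ℕ, M < tk k) ∧
    (∀ t < tk 0, x t = μ) ∧
    (∀ k : ℕ, ∀ t ∈ Set.Ico (tk k) (tk (k + 1)), x t = x (tk k))

/-- Given a signal `x` with initial value `μ`, `T > 0` and `t₀`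
with `x = μ` before `t₀` and `x t₀ ≠ μ`, there exist `t₁ < t₀ + T` and values
`c` (the left limit of `x` at `t₀ + T`) and `v` (the left limit of `x` at
`t₁`) with `x = c` on `[t₁, t₀ + T)` and `v ≠ x t₁`. -/
theorem stmt_9 (n : ℕ) (x : ℝ → (Fin n → Bool)) (μ : Fin n → Bool)
    (hsig : IsSignalWithInit n x μ)
    (T t₀ : ℝ) (hT : 0 < T)
    (h0a : ∀ t < t₀, x t = μ) (h0b : x t₀ ≠ μ) :
    ∃ t₁ : ℝ, ∃ c v : Fin n → Bool,
      t₁ < t₀ + T ∧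
      (∃ ε > 0, ∀ ξ ∈ Set.Ioo (t₀ + T - ε) (t₀ + T), x ξ = c) ∧
      (∀ t ∈ Set.Ico t₁ (t₀ + T), x t = c) ∧
      (∃ ε > 0, ∀ ξ ∈ Set.Ioo (t₁ - ε) t₁, x ξ = v) ∧
      v ≠ x t₁ := by
  classical
  obtain ⟨tk, hmono, hub, hinit, hconst⟩ := hsig
  -- left value function
  let L : ℕ → (Fin n → Bool) := fun m => Nat.rec μ (fun p _ => x (tk p)) m
  have hL0 : L 0 = μ := rfl
  have hLs : ∀ p : ℕ, L (p + 1) = x (tk p) := fun p => rfl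
  -- t₀ is a breakpoint
  have htk0 : tk 0 ≤ t₀ := by
    by_contra h
    exact h0b (hinit t₀ (lt_of_not_ge h))
  have hQex : ∃ m, t₀ < tk m := hub t₀
  obtain ⟨k, hk⟩ : ∃ k, Nat.find hQex = k + 1 :=
    Nat.exists_eq_succ_of_ne_zero (by
      intro h
      exact absurd (h ▸ Nat.find_spec hQex) (not_lt.mpr htk0))
  have hkle : tk k ≤ t₀ := not_lt.mp (Nat.find_min hQex (by omega))
  have hklt : t₀ < tk (k + 1) := hk ▸ Nat.find_spec hQex
  have hxt0 : x t₀ = x (tk k) := hconst k t₀ ⟨hkle, hklt⟩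
  have hkeq : tk k = t₀ := by
    rcases eq_or_lt_of_le hkle with h | h
    · exact h
    · exact absurd (hxt0.trans (h0a (tk k) h)) h0b
  -- the jump predicate
  let P : ℕ → Prop := fun m => tk m < t₀ + T ∧ L m ≠ x (tk m)
  have hPk : P k := by
    refine ⟨hkeq ▸ (lt_add_of_pos_right t₀ hT), ?_⟩
    cases k with
    | zero => rw [hL0, hkeq]; exact fun h => h0b h.symm
    | succ p =>
        rw [hLs p]
        have hp : tk p < t₀ := hkeq ▸ hmono (Nat.lt_succ_self p)
        rw [h0a (tk p) hp, hkeq]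
        exact fun h => h0b h.symm
  -- bound
  obtain ⟨K, hK⟩ := hub (t₀ + T)
  have hkK : k ≤ K := le_of_lt (hmono.lt_iff_lt.mp (by
    rw [hkeq]; exact lt_trans (lt_add_of_pos_right t₀ hT) hK))
  -- the last jump index
  haveI : DecidablePred P := fun _ => Classical.dec _
  set m₁ := Nat.findGreatest P K with hm₁
  have hPm₁ : P m₁ := Nat.findGreatest_spec hkK hPk
  have hmax : ∀ j, m₁ < j → tk j < t₀ + T → ¬ P j := by
    intro j hj hjt
    refine Nat.findGreatest_is_greatest hj (le_of_lt (hmono.lt_iff_lt.mp ?_))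
    exact lt_trans hjt hK
  -- chain: constant value from m₁ on
  have chain : ∀ j, m₁ ≤ j → tk j < t₀ + T → x (tk j) = x (tk m₁) := by
    intro j hle
    induction j, hle using Nat.le_induction with
    | base => intro _; rfl
    | succ j hj ih =>
        intro hjt
        have hjlt : tk j < t₀ + T := lt_trans (hmono (Nat.lt_succ_self j)) hjt
        have hnp : ¬ P (j + 1) := hmax (j + 1) (Nat.lt_succ_of_le hj) hjt
        have : L (j + 1) = x (tk (j + 1)) := by
          by_contra h
          exact hnp ⟨hjt, h⟩
        rw [← this, hLs j, ih hjlt]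
  -- locating t in an interval
  have mem : ∀ t, tk m₁ ≤ t → ∃ j, m₁ ≤ j ∧ tk j ≤ t ∧ t < tk (j + 1) := by
    intro t ht
    have hRex : ∃ m, t < tk m := hub t
    obtain ⟨j, hj⟩ : ∃ j, Nat.find hRex = j + 1 :=
      Nat.exists_eq_succ_of_ne_zero (by
        intro h
        exact absurd (h ▸ Nat.find_spec hRex)
          (not_lt.mpr (le_trans (hmono.monotone (Nat.zero_le m₁)) ht)))
    have hjle : tk j ≤ t := not_lt.mp (Nat.find_min hRex (by omega))
    have hjlt : t < tk (j + 1) := hj ▸ Nat.find_spec hRex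
    refine ⟨j, ?_, hjle, hjlt⟩
    by_contra h
    have : t < tk m₁ := lt_of_lt_of_le hjlt (hmono.monotone (by omega))
    exact absurd ht (not_le.mpr this)
  -- main constancy on [t₁, t₀+T)
  have hcon : ∀ t ∈ Set.Ico (tk m₁) (t₀ + T), x t = x (tk m₁) := by
    rintro t ⟨ht1, ht2⟩
    obtain ⟨j, hmj, hjle, hjlt⟩ := mem t ht1
    rw [hconst j t ⟨hjle, hjlt⟩]
    exact chain j hmj (lt_of_le_of_lt hjle ht2)
  refine ⟨tk m₁, x (tk m₁), L m₁, hPm₁.1, ?_, hcon, ?_, hPm₁.2⟩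
  · refine ⟨t₀ + T - tk m₁, by linarith [hPm₁.1], fun ξ hξ => ?_⟩
    exact hcon ξ ⟨by linarith [hξ.1], hξ.2⟩
  · cases hm : m₁ with
    | zero =>
        refine ⟨1, one_pos, fun ξ hξ => ?_⟩
        rw [hL0]
        exact hinit ξ hξ.2
    | succ p =>
        refine ⟨tk (p + 1) - tk p, by linarith [hmono (Nat.lt_succ_self p)], fun ξ hξ => ?_⟩
        rw [hLs p]
        exact hconst p ξ ⟨by linarith [hξ.1], hξ.2⟩
end

section
/- Let x : ℝ → 𝔹ⁿ be a signal. Then for every t' ∈ ℝ there exist ε > 0 and a value w ∈ 𝔹ⁿ such that x(ξ) = w for all ξ ∈ (t' - ε, t'); i.e., the left limit x(t'−0) exists at every point, and it does not depend on the choice of the representing sequence (t_k). -/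
/-- A function `x : ℝ → 𝔹ⁿ` is a signal if there are an initial value `μ` and
a strictly increasing sequence of reals, unbounded from above, such that `x`
equals `μ` before the first point and is constant on each interval
`[tₖ, tₖ₊₁)`. -/
def IsSignal (n : ℕ) (x : ℝ → (Fin n → Bool)) : Prop :=
  ∃ μ : Fin n → Bool, ∃ tk : ℕ → ℝ, StrictMono tk ∧ (∀ M : ℝ, ∃ k : ℕ, M < tk k) ∧
    (∀ t < tk 0, x t = μ) ∧
    (∀ k : ℕ, ∀ t ∈ Set.Ico (tk k) (tk (k + 1)), x t = x (tk k))

/-- A signal has a left limit at every point: for every `t'`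
there are `ε > 0` and a value `w` with `x ξ = w` on `(t' - ε, t')`; moreover
this value `w` is unique (hence independent of the representing sequence). -/
theorem stmt_10 (n : ℕ) (x : ℝ → (Fin n → Bool)) (hsig : IsSignal n x) :
    ∀ t' : ℝ, ∃ ε > 0, ∃ w : Fin n → Bool,
      (∀ ξ ∈ Set.Ioo (t' - ε) t', x ξ = w) ∧
      (∀ ε' > 0, ∀ w' : Fin n → Bool,
        (∀ ξ ∈ Set.Ioo (t' - ε') t', x ξ = w') → w' = w) := by
  intro t'
  obtain ⟨μ, tk, hmono, hunb, hinit, hstep⟩ := hsig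
  suffices h : ∃ ε > 0, ∃ w : Fin n → Bool, ∀ ξ ∈ Set.Ioo (t' - ε) t', x ξ = w by
    obtain ⟨ε, hε, w, hw⟩ := h
    refine ⟨ε, hε, w, hw, ?_⟩
    intro ε' hε' w' hw'
    obtain ⟨ξ, hξ⟩ : ∃ ξ, ξ = t' - min ε ε' / 2 := ⟨_, rfl⟩
    have hpos : 0 < min ε ε' := lt_min hε hε'
    have h1 : ξ ∈ Set.Ioo (t' - ε) t' := by
      constructor
      · have : min ε ε' / 2 < ε := lt_of_lt_of_le (by linarith) (min_le_left ε ε')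
        linarith
      · linarith
    have h2 : ξ ∈ Set.Ioo (t' - ε') t' := by
      constructor
      · have : min ε ε' / 2 < ε' := lt_of_lt_of_le (by linarith) (min_le_right ε ε')
        linarith
      · linarith
    rw [← hw' ξ h2, hw ξ h1]
  by_cases hc : t' ≤ tk 0
  · refine ⟨1, one_pos, μ, fun ξ hξ => hinit ξ (lt_of_lt_of_le hξ.2 hc)⟩
  · push_neg at hc
    -- least K with t' ≤ tk K
    have hex : ∃ k, t' ≤ tk k := by
      obtain ⟨k, hk⟩ := hunb t'
      exact ⟨k, hk.le⟩
    classical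
    set K := Nat.find hex with hK
    have hKle : t' ≤ tk K := Nat.find_spec hex
    have hKpos : K ≠ 0 := by
      intro h0
      rw [h0] at hKle
      exact absurd hKle (not_le.mpr hc)
    obtain ⟨m, hm⟩ := Nat.exists_eq_succ_of_ne_zero hKpos
    have hmlt : tk m < t' := by
      have := Nat.find_min hex (by omega : m < K)
      push_neg at this
      exact this
    refine ⟨t' - tk m, by linarith, x (tk m), ?_⟩
    intro ξ hξ
    apply hstep m
    constructor
    · have : t' - (t' - tk m) = tk m := by ring
      rw [this] at hξ
      exact hξ.1.le
    · calc ξ < t' := hξ.2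
        _ ≤ tk K := hKle
        _ = tk (m + 1) := by rw [hm]
end
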